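/- In the block-separable setting, for every x ∈ Ω and every i one has ∇ᵢf(x)ᵀ(pᵢ(x) − xᵢ) ≤ 0, with equality if and only if pᵢ(x) = xᵢ, where pᵢ(x) = argmin_{zᵢ∈Ωᵢ} hⁱ(zᵢ, x). -/

import Mathlib

open scoped RealInnerProductSpace

theorem statement13 {m : ℕ} {n : Fin m → ℕ}
    (Ω : ∀ i, Set (EuclideanSpace ℝ (Fin (n i))))
    (hΩc : ∀ i, IsClosed (Ω i)) (hΩconv : ∀ i, Convex ℝ (Ω i))
    (hΩne : ∀ i, (Ω i).Nonempty)
    (f : PiLp 2 (fun i => EuclideanSpace ℝ (Fin (n i))) → ℝ) (hf : ContDiff ℝ 1 f)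
    (hi : ∀ i, EuclideanSpace ℝ (Fin (n i)) →
      PiLp 2 (fun i => EuclideanSpace ℝ (Fin (n i))) → ℝ)
    (hismooth : ∀ i y, ContDiff ℝ 1 (fun u => hi i u y))
    (x : PiLp 2 (fun i => EuclideanSpace ℝ (Fin (n i)))) (hx : ∀ j, x j ∈ Ω j)
    (hiconv : ∀ i, ∀ u ∈ Ω i, ∀ v ∈ Ω i,
      hi i u x + ⟪gradient (fun w => hi i w x) u, v - u⟫ ≤ hi i v x)
    (higrad : ∀ i, ∀ d : EuclideanSpace ℝ (Fin (n i)), x i + d ∈ Ω i →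
      ⟪gradient (fun u => hi i u x) (x i), d⟫ =
      ⟪gradient (fun u => f (WithLp.toLp 2 (Function.update x i u))) (x i), d⟫)
    (p : ∀ i, EuclideanSpace ℝ (Fin (n i)))
    (hpΩ : ∀ i, p i ∈ Ω i)
    (hpmin : ∀ i, ∀ u ∈ Ω i, hi i (p i) x ≤ hi i u x)
    (hpuniq : ∀ i, ∀ w ∈ Ω i, (∀ u ∈ Ω i, hi i w x ≤ hi i u x) → w = p i)
    (i : Fin m) :
    ⟪gradient (fun u => f (WithLp.toLp 2 (Function.update x i u))) (x i), p i - x i⟫ ≤ 0 ∧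
    (⟪gradient (fun u => f (WithLp.toLp 2 (Function.update x i u))) (x i), p i - x i⟫ = 0 ↔ p i = x i) := by
  have hdmem : x i + (p i - x i) ∈ Ω i := by
    have : x i + (p i - x i) = p i := by abel
    rw [this]; exact hpΩ i
  have heq := higrad i (p i - x i) hdmem
  have hconv := hiconv i (x i) (hx i) (p i) (hpΩ i)
  have hmin := hpmin i (x i) (hx i)
  constructor
  · rw [← heq]; linarith
  · constructor
    · intro h0
      have hg0 : ⟪gradient (fun w => hi i w x) (x i), p i - x i⟫ = 0 := by
        rw [heq, h0]
      have hxmin : ∀ u ∈ Ω i, hi i (x i) x ≤ hi i u x := by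
        intro u hu
        have := hpmin i u hu
        linarith [hconv, hg0]
      exact (hpuniq i (x i) (hx i) hxmin).symm
    · intro h; rw [h]; simp
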